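/- Let K ≥ 2, M ≥ 1, N ≥ 1 be integers with K·M > N, and let i* = ⌊N/M⌋. Then the function f(p) = Σ_{i=i*+1}^{K} B_K(i)·(i·M - N), where B_K(i) = C(K,i) p^i (1-p)^{K-i}, is convex on [0,1], satisfies f(0) = 0 and f(1) = K·M - N, and its second derivative equals f''(p) = K(K-1)·[(N - i*·M)·B_{K-2}(i*) - (N - (i*+1)·M)·B_{K-2}(i*-1)], which is nonnegative on [0,1]. -/

import Mathlib

noncomputable def binPMF (K : ℕ) (i : ℤ) (p : ℝ) : ℝ :=
  if 0 ≤ i then (K.choose i.toNat : ℝ) * p ^ i.toNat * (1 - p) ^ (K - i.toNat) else 0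

lemma binPMF_coe (K j : ℕ) (p : ℝ) :
    binPMF K (j : ℤ) p = (K.choose j : ℝ) * p ^ j * (1 - p) ^ (K - j) := by
  simp [binPMF]

lemma binPMF_neg (K : ℕ) (i : ℤ) (p : ℝ) (hi : i < 0) : binPMF K i p = 0 := by
  simp [binPMF, not_le.mpr hi]

lemma binPMF_nonneg (K : ℕ) (i : ℤ) (p : ℝ) (hp : 0 ≤ p) (hp1 : p ≤ 1) :
    0 ≤ binPMF K i p := by
  unfold binPMF
  split
  · have : (0:ℝ) ≤ 1 - p := by linarith
    positivity
  · exact le_refl 0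

lemma binPMF_zero_of_lt (K : ℕ) (j : ℕ) (p : ℝ) (hj : K < j) : binPMF K (j : ℤ) p = 0 := by
  rw [binPMF_coe, Nat.choose_eq_zero_of_lt hj]; simp

-- choose identities
lemma chmul (n k : ℕ) (hk : 1 ≤ k) : n.choose k * k = n * (n-1).choose (k-1) := by
  obtain ⟨j, rfl⟩ := Nat.exists_eq_add_of_le hk
  cases n with
  | zero => simp [Nat.choose_eq_zero_of_lt (by omega : 0 < 1 + j)]
  | succ m =>
    have := Nat.add_one_mul_choose_eq m j
    have h1 : 1 + j = j + 1 := by omega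
    rw [h1]
    simp only [Nat.add_sub_cancel]
    exact this.symm

lemma chmul' (n k : ℕ) : n.choose k * (n - k) = n * (n-1).choose k := by
  rcases le_or_gt k n with hkn | hkn
  · rcases eq_or_lt_of_le hkn with rfl | hlt
    · cases k with
      | zero => simp
      | succ m =>
        simp [Nat.choose_eq_zero_of_lt (by omega : m < m + 1)]
    · have h1 : n.choose k = n.choose (n - k) := (Nat.choose_symm hkn).symm
      rw [h1, chmul n (n-k) (by omega)]
      congr 1
      have h2 : n - k - 1 = (n - 1) - k := by omega
      rw [h2, Nat.choose_symm (by omega : k ≤ n - 1)]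
  · rw [Nat.choose_eq_zero_of_lt hkn, Nat.choose_eq_zero_of_lt (by omega : n - 1 < k)]
    ring

lemma ch1 (K i : ℕ) (hi : 2 ≤ i) : K.choose i * (i * (i-1)) = K * (K-1) * (K-2).choose (i-2) := by
  have h1 := chmul K i (by omega)
  have h2 := chmul (K-1) (i-1) (by omega)
  have h3 : i - 1 - 1 = i - 2 := by omega
  have h4 : K - 1 - 1 = K - 2 := by omega
  rw [h3, h4] at h2
  calc K.choose i * (i * (i-1)) = K.choose i * i * (i-1) := by ring
    _ = K * (K-1).choose (i-1) * (i-1) := by rw [h1]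
    _ = K * ((K-1).choose (i-1) * (i-1)) := by ring
    _ = K * ((K-1) * (K-2).choose (i-2)) := by rw [h2]
    _ = _ := by ring

lemma ch2 (K i : ℕ) (hi : 1 ≤ i) : K.choose i * (i * (K-i)) = K * (K-1) * (K-2).choose (i-1) := by
  have h1 := chmul K i hi
  have h2 := chmul' (K-1) (i-1)
  have h3 : K - 1 - (i - 1) = K - i := by omega
  have h4 : K - 1 - 1 = K - 2 := by omega
  rw [h3, h4] at h2
  calc K.choose i * (i * (K-i)) = K.choose i * i * (K-i) := by ring
    _ = K * (K-1).choose (i-1) * (K-i) := by rw [h1]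
    _ = K * ((K-1).choose (i-1) * (K-i)) := by ring
    _ = K * ((K-1) * (K-2).choose (i-1)) := by rw [h2]
    _ = _ := by ring

lemma ch3 (K i : ℕ) : K.choose i * ((K-i) * (K-i-1)) = K * (K-1) * (K-2).choose i := by
  have h1 := chmul' K i
  have h2 := chmul' (K-1) i
  have h3 : K - 1 - i = K - i - 1 := by omega
  have h4 : K - 1 - 1 = K - 2 := by omega
  rw [h3, h4] at h2
  calc K.choose i * ((K-i) * (K-i-1)) = K.choose i * (K-i) * (K-i-1) := by ring
    _ = K * (K-1).choose i * (K-i-1) := by rw [h1]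
    _ = K * ((K-1).choose i * (K-i-1)) := by ring
    _ = K * ((K-1) * (K-2).choose i) := by rw [h2]
    _ = _ := by ring

lemma hasDerivAt_term (a b : ℕ) (p : ℝ) :
    HasDerivAt (fun p : ℝ => p^a * (1-p)^b)
      ((a:ℝ)*p^(a-1)*(1-p)^b - (b:ℝ)*p^a*(1-p)^(b-1)) p := by
  have h1 : HasDerivAt (fun p:ℝ => p^a) ((a:ℝ)*p^(a-1)) p := hasDerivAt_pow a p
  have h0 : HasDerivAt (fun p:ℝ => 1-p) (-1) p := by
    simpa using (hasDerivAt_id p).const_sub (1:ℝ)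
  have h2 : HasDerivAt (fun p:ℝ => (1-p)^b) (-((b:ℝ)*(1-p)^(b-1))) p := by
    have := h0.fun_pow b
    convert this using 1
    exacts [rfl, rfl, by ring]
  have := h1.fun_mul h2
  convert this using 1
  exacts [rfl, rfl, by ring]

lemma tele (B : ℤ → ℝ) (g : ℤ → ℝ) (hg : ∀ x : ℤ, g (x+1) + g (x-1) = 2 * g x) (a b : ℕ)
    (hab : a ≤ b) :
    ∑ i ∈ Finset.Icc (a+1) b, g (i:ℤ) * (B ((i:ℤ)-2) - 2*B ((i:ℤ)-1) + B (i:ℤ))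
      = (g ((a:ℤ)+1) * B ((a:ℤ)-1) - g (a:ℤ) * B (a:ℤ))
        - (g ((b:ℤ)+1) * B ((b:ℤ)-1) - g (b:ℤ) * B (b:ℤ)) := by
  induction b, hab using Nat.le_induction with
  | base => simp
  | succ b hab ih =>
    rw [Finset.sum_Icc_succ_top (by omega : a + 1 ≤ b + 1), ih]
    have h1 := hg ((b:ℤ))
    have h2 := hg ((b:ℤ)+1)
    push_cast
    ring_nf
    ring_nf at h2
    linear_combination (B (b:ℤ)) * h2

lemma key (K i : ℕ) (hK : 2 ≤ K) (hi1 : 1 ≤ i) (hiK : i ≤ K) (p : ℝ) :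
    (K.choose i : ℝ) *
      ((i:ℝ) * (((i-1:ℕ):ℝ) * p^(i-2) * (1-p)^(K-i) - ((K-i:ℕ):ℝ) * p^(i-1) * (1-p)^(K-i-1))
        - ((K-i:ℕ):ℝ) * ((i:ℝ) * p^(i-1) * (1-p)^(K-i-1) - ((K-i-1:ℕ):ℝ) * p^i * (1-p)^(K-i-2)))
    = (K:ℝ)*((K:ℝ)-1) *
        (binPMF (K-2) ((i:ℤ)-2) p - 2 * binPMF (K-2) ((i:ℤ)-1) p + binPMF (K-2) (i:ℤ) p) := by
  have hK1 : ((K-1:ℕ):ℝ) = (K:ℝ)-1 := by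
    rw [Nat.cast_sub (by omega : 1 ≤ K)]; norm_num
  have e2 : (K.choose i:ℝ)*((i:ℝ)*((K-i:ℕ):ℝ)) = (K:ℝ)*((K:ℝ)-1)*((K-2).choose (i-1):ℝ) := by
    rw [← hK1]; exact_mod_cast ch2 K i hi1
  have e3 : (K.choose i:ℝ)*(((K-i:ℕ):ℝ)*((K-i-1:ℕ):ℝ)) = (K:ℝ)*((K:ℝ)-1)*((K-2).choose i:ℝ) := by
    rw [← hK1]; exact_mod_cast ch3 K i
  rcases eq_or_lt_of_le hi1 with rfl | hi2
  · -- i = 1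
    simp only [Nat.cast_one]
    have hb1 : binPMF (K-2) ((1:ℤ)-2) p = 0 := binPMF_neg _ _ _ (by omega)
    have hb2 : binPMF (K-2) ((1:ℤ)-1) p = ((K-2).choose 0 : ℝ) * p^0 * (1-p)^(K-2-0) := by
      rw [(by norm_num : ((1:ℤ)-1) = ((0:ℕ):ℤ)), binPMF_coe]
    have hb3 : binPMF (K-2) ((1:ℤ)) p = ((K-2).choose 1 : ℝ) * p^1 * (1-p)^(K-2-1) := by
      rw [(by norm_num : ((1:ℤ)) = ((1:ℕ):ℤ)), binPMF_coe]
    rw [hb1, hb2, hb3]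
    have h1 : K - 2 - 0 = K - 1 - 1 := by omega
    have h2 : K - 2 - 1 = K - 1 - 2 := by omega
    have h3 : ((1-1:ℕ):ℝ) = 0 := by norm_num
    rw [h1, h2, h3]
    linear_combination (-2 * (p^(1-1) * (1-p)^(K-1-1))) * e2 + (p^1 * (1-p)^(K-1-2)) * e3
  · -- i ≥ 2
    have hi2' : 2 ≤ i := hi2
    have e1 : (K.choose i:ℝ)*((i:ℝ)*((i-1:ℕ):ℝ)) = (K:ℝ)*((K:ℝ)-1)*((K-2).choose (i-2):ℝ) := by
      rw [← hK1]; exact_mod_cast ch1 K i hi2'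
    have hb1 : binPMF (K-2) ((i:ℤ)-2) p = ((K-2).choose (i-2) : ℝ) * p^(i-2) * (1-p)^(K-2-(i-2)) := by
      rw [(by push_cast; omega : ((i:ℤ)-2) = ((i-2:ℕ):ℤ)), binPMF_coe]
    have hb2 : binPMF (K-2) ((i:ℤ)-1) p = ((K-2).choose (i-1) : ℝ) * p^(i-1) * (1-p)^(K-2-(i-1)) := by
      rw [(by push_cast; omega : ((i:ℤ)-1) = ((i-1:ℕ):ℤ)), binPMF_coe]
    have hb3 : binPMF (K-2) ((i:ℤ)) p = ((K-2).choose i : ℝ) * p^i * (1-p)^(K-2-i) := by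
      rw [binPMF_coe]
    rw [hb1, hb2, hb3]
    have h1 : K - 2 - (i-2) = K - i := by omega
    have h2 : K - 2 - (i-1) = K - i - 1 := by omega
    have h3 : K - 2 - i = K - i - 2 := by omega
    rw [h1, h2, h3]
    linear_combination (p^(i-2) * (1-p)^(K-i)) * e1
      + (-2 * (p^(i-1) * (1-p)^(K-i-1))) * e2 + (p^i * (1-p)^(K-i-2)) * e3

theorem reception_gain_convex (K M N : ℕ) (hK : 2 ≤ K) (hM : 1 ≤ M) (hN : 1 ≤ N)
    (h : N < K * M) :
    let istar := N / M
    let f : ℝ → ℝ := fun p =>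
      ∑ i ∈ Finset.Icc (istar + 1) K, binPMF K (i : ℤ) p * ((i : ℝ) * M - N)
    ConvexOn ℝ (Set.Icc (0:ℝ) 1) f ∧ f 0 = 0 ∧ f 1 = (K : ℝ) * M - N ∧
    ∀ p ∈ Set.Icc (0:ℝ) 1,
      iteratedDeriv 2 f p
        = (K : ℝ) * ((K : ℝ) - 1) *
            (((N : ℝ) - (istar : ℝ) * M) * binPMF (K-2) (istar : ℤ) p
              - ((N : ℝ) - ((istar : ℝ) + 1) * M) * binPMF (K-2) ((istar : ℤ) - 1) p) ∧
      0 ≤ iteratedDeriv 2 f p := by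
  intro istar f
  have hsK : istar + 1 ≤ K := by
    have h2 := (Nat.div_lt_iff_lt_mul (by omega : 0 < M)).mpr h
    show N / M + 1 ≤ K
    omega
  have hsM : istar * M ≤ N := Nat.div_mul_le_self N M
  have hsM2 : N < (istar + 1) * M := by
    show N < (N / M + 1) * M
    have h2 := Nat.lt_mul_div_succ N (by omega : 0 < M)
    rw [Nat.mul_comm]
    exact h2
  set f1 : ℝ → ℝ := fun p => ∑ i ∈ Finset.Icc (istar+1) K,
    (K.choose i : ℝ) * ((i:ℝ)*M - (N:ℝ)) *
      ((i:ℝ)*p^(i-1)*(1-p)^(K-i) - ((K-i:ℕ):ℝ)*p^i*(1-p)^(K-i-1)) with hf1def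
  set f2 : ℝ → ℝ := fun p => ∑ i ∈ Finset.Icc (istar+1) K,
    (K.choose i : ℝ) * ((i:ℝ)*M - (N:ℝ)) *
      ((i:ℝ) * (((i-1:ℕ):ℝ) * p^(i-2) * (1-p)^(K-i) - ((K-i:ℕ):ℝ) * p^(i-1) * (1-p)^(K-i-1))
        - ((K-i:ℕ):ℝ) * ((i:ℝ) * p^(i-1) * (1-p)^(K-i-1)
            - ((K-i-1:ℕ):ℝ) * p^i * (1-p)^(K-i-2))) with hf2def
  have hd1 : ∀ p : ℝ, HasDerivAt f (f1 p) p := by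
    intro p
    apply HasDerivAt.fun_sum
    intro i hi
    have hrw : (fun q : ℝ => binPMF K (i:ℤ) q * ((i:ℝ)*M - N))
        = fun q => ((K.choose i:ℝ) * ((i:ℝ)*M - N)) * (q^i * (1-q)^(K-i)) := by
      funext q; rw [binPMF_coe]; ring
    rw [hrw]
    exact (hasDerivAt_term i (K-i) p).const_mul ((K.choose i:ℝ) * ((i:ℝ)*M - N))
  have hd2 : ∀ p : ℝ, HasDerivAt f1 (f2 p) p := by
    intro p
    apply HasDerivAt.fun_sum
    intro i hi
    have hterm := (((hasDerivAt_term (i-1) (K-i) p).const_mul ((i:ℝ))).fun_sub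
      ((hasDerivAt_term i (K-i-1) p).const_mul (((K-i:ℕ):ℝ)))).const_mul
        ((K.choose i:ℝ) * ((i:ℝ)*M - (N:ℝ)))
    have hfe : (fun y:ℝ => (K.choose i:ℝ) * ((i:ℝ)*M - (N:ℝ)) *
          ((i:ℝ)*(y^(i-1)*(1-y)^(K-i)) - ((K-i:ℕ):ℝ)*(y^i*(1-y)^(K-i-1))))
        = fun y:ℝ => (K.choose i:ℝ) * ((i:ℝ)*M - (N:ℝ)) *
          ((i:ℝ)*y^(i-1)*(1-y)^(K-i) - ((K-i:ℕ):ℝ)*y^i*(1-y)^(K-i-1)) := by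
      funext q; ring
    rw [hfe] at hterm
    convert hterm using 1
    exacts [rfl, rfl]
  have hderivf : deriv f = f1 := funext fun p => (hd1 p).deriv
  have hderivf1 : deriv f1 = f2 := funext fun p => (hd2 p).deriv
  have hiter : ∀ p : ℝ, iteratedDeriv 2 f p = f2 p := by
    intro p
    rw [show (2:ℕ) = 1 + 1 from rfl, iteratedDeriv_succ, iteratedDeriv_one,
      hderivf, hderivf1]
  have hg : ∀ x : ℤ, ((x+1:ℤ):ℝ)*(M:ℝ) - (N:ℝ) + (((x-1:ℤ):ℝ)*(M:ℝ) - (N:ℝ))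
      = 2 * (((x:ℤ):ℝ)*(M:ℝ) - (N:ℝ)) := by
    intro x; push_cast; ring
  have hf2val : ∀ p : ℝ, f2 p
      = (K : ℝ) * ((K : ℝ) - 1) *
          (((N : ℝ) - (istar : ℝ) * M) * binPMF (K-2) (istar : ℤ) p
            - ((N : ℝ) - ((istar : ℝ) + 1) * M) * binPMF (K-2) ((istar : ℤ) - 1) p) := by
    intro p
    have hBK1 : binPMF (K-2) ((K:ℤ)-1) p = 0 := by
      rw [show ((K:ℤ)-1) = ((K-1:ℕ):ℤ) by push_cast [Nat.cast_sub (by omega : 1 ≤ K)]; ring]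
      exact binPMF_zero_of_lt _ _ _ (by omega)
    have hBK : binPMF (K-2) ((K:ℤ)) p = 0 := binPMF_zero_of_lt _ _ _ (by omega)
    have htele := tele (fun j : ℤ => binPMF (K-2) j p)
      (fun x : ℤ => (x:ℝ)*(M:ℝ) - (N:ℝ)) hg istar K (Nat.le_of_succ_le hsK)
    calc f2 p = (K:ℝ)*((K:ℝ)-1) * ∑ i ∈ Finset.Icc (istar+1) K,
          (((i:ℤ):ℝ)*(M:ℝ) - (N:ℝ)) *
            (binPMF (K-2) ((i:ℤ)-2) p - 2*binPMF (K-2) ((i:ℤ)-1) p + binPMF (K-2) (i:ℤ) p) := by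
            simp only [hf2def]
            rw [Finset.mul_sum]
            refine Finset.sum_congr rfl ?_
            intro i hi
            simp only [Finset.mem_Icc] at hi
            have hkey := key K i hK (le_trans (Nat.le_add_left 1 istar) hi.1) hi.2 p
            push_cast
            linear_combination ((i:ℝ)*(M:ℝ) - (N:ℝ)) * hkey
      _ = _ := by
            rw [htele]
            simp only [hBK1, hBK]
            push_cast
            ring
  have hnonneg : ∀ p : ℝ, 0 ≤ p → p ≤ 1 → 0 ≤ f2 p := by
    intro p hp0 hp1
    rw [hf2val p]
    have hB1 : (0:ℝ) ≤ binPMF (K-2) (istar:ℤ) p := binPMF_nonneg _ _ _ hp0 hp1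
    have hB2 : (0:ℝ) ≤ binPMF (K-2) ((istar:ℤ)-1) p := binPMF_nonneg _ _ _ hp0 hp1
    have hc1 : (0:ℝ) ≤ (N:ℝ) - (istar:ℝ)*M := by
      have h2 : ((istar * M : ℕ) : ℝ) ≤ (N:ℝ) := by exact_mod_cast hsM
      push_cast at h2; linarith
    have hc2 : ((N:ℝ) - ((istar:ℝ)+1)*M) ≤ 0 := by
      have h2 : (N:ℝ) < (((istar+1) * M : ℕ) : ℝ) := by exact_mod_cast hsM2
      push_cast at h2; linarith
    have hKr : (0:ℝ) ≤ (K:ℝ)*((K:ℝ)-1) := by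
      have h2 : (2:ℝ) ≤ (K:ℝ) := by exact_mod_cast hK
      nlinarith
    nlinarith [mul_nonneg hc1 hB1, mul_nonneg (neg_nonneg.mpr hc2) hB2]
  refine ⟨?_, ?_, ?_, ?_⟩
  · -- convexity
    apply convexOn_of_deriv2_nonneg (convex_Icc 0 1)
    · exact (Differentiable.continuous (fun p => (hd1 p).differentiableAt)).continuousOn
    · exact fun p _ => ((hd1 p).differentiableAt).differentiableWithinAt
    · rw [hderivf]
      exact fun p _ => ((hd2 p).differentiableAt).differentiableWithinAt
    · intro p hp
      rw [interior_Icc] at hp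
      have h2 : deriv^[2] f p = iteratedDeriv 2 f p := by
        rw [iteratedDeriv_eq_iterate]
      rw [h2, hiter p]
      exact hnonneg p (le_of_lt hp.1) (le_of_lt hp.2)
  · -- f 0 = 0
    calc f 0 = ∑ i ∈ Finset.Icc (istar+1) K, binPMF K (i:ℤ) 0 * ((i:ℝ)*M - N) := rfl
      _ = 0 := by
        apply Finset.sum_eq_zero
        intro i hi
        simp only [Finset.mem_Icc] at hi
        rw [binPMF_coe, zero_pow (Nat.one_le_iff_ne_zero.mp (le_trans (Nat.le_add_left 1 istar) hi.1))]
        ring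
  · -- f 1 = K M - N
    have hmem : K ∈ Finset.Icc (istar+1) K := by
      simp only [Finset.mem_Icc]
      exact ⟨hsK, le_refl K⟩
    have hzero : ∀ b ∈ Finset.Icc (istar+1) K, b ≠ K →
        binPMF K (b:ℤ) 1 * ((b:ℝ)*M - N) = 0 := by
      intro b hb hbK
      simp only [Finset.mem_Icc] at hb
      rw [binPMF_coe, show (1:ℝ)-1 = 0 by ring, zero_pow (by omega : K - b ≠ 0)]
      ring
    calc f 1 = ∑ i ∈ Finset.Icc (istar+1) K, binPMF K (i:ℤ) 1 * ((i:ℝ)*M - N) := rfl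
      _ = binPMF K (K:ℤ) 1 * ((K:ℝ)*M - N) := Finset.sum_eq_single_of_mem K hmem hzero
      _ = (K:ℝ)*M - N := by
        rw [binPMF_coe]
        simp
  · intro p hp
    refine ⟨by rw [hiter p, hf2val p], ?_⟩
    rw [hiter p]
    exact hnonneg p hp.1 hp.2
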